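/- Let A be an invertible two-level sparse matrix built from blocks A₁₁, A₁₂,ᵢ, A₂₂,ᵢ (1 ≤ i ≤ m), suppose each A₂₂,ᵢ is invertible, and let x, a be vectors in ℝ^{p+mq} with A x = a, partitioned into a p-block x₁ (resp. a₁) and q-blocks x₂,ᵢ (resp. a₂,ᵢ) for 1 ≤ i ≤ m. Then x₁ = A¹¹ (a₁ − Σ_{i=1}^m A₁₂,ᵢ A₂₂,ᵢ⁻¹ a₂,ᵢ) and x₂,ᵢ = A₂₂,ᵢ⁻¹ (a₂,ᵢ − A₁₂,ᵢᵀ x₁) for all 1 ≤ i ≤ m. -/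

import Mathlib

open Matrix

/-- The two-level sparse matrix built from blocks `A11`, `A12 i`, `A22 i`. -/
def twoLevelSparse {p q m : ℕ}
    (A11 : Matrix (Fin p) (Fin p) ℝ)
    (A12 : Fin m → Matrix (Fin p) (Fin q) ℝ)
    (A22 : Fin m → Matrix (Fin q) (Fin q) ℝ) :
    Matrix (Fin p ⊕ Fin m × Fin q) (Fin p ⊕ Fin m × Fin q) ℝ :=
  Matrix.of fun x y =>
    match x, y with
    | Sum.inl a, Sum.inl b => A11 a b
    | Sum.inl a, Sum.inr (i, b) => A12 i a b
    | Sum.inr (i, a), Sum.inl b => A12 i b a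
    | Sum.inr (i, a), Sum.inr (i', b) => if i = i' then A22 i a b else 0

section Aux

variable {p q m : ℕ}

/-- Combined off-diagonal block. -/
def tlC (A12 : Fin m → Matrix (Fin p) (Fin q) ℝ) :
    Matrix (Fin p) (Fin m × Fin q) ℝ :=
  Matrix.of fun a ib => A12 ib.1 a ib.2

/-- Transposed combined off-diagonal block. -/
def tlCt (A12 : Fin m → Matrix (Fin p) (Fin q) ℝ) :
    Matrix (Fin m × Fin q) (Fin p) ℝ :=
  Matrix.of fun ia b => A12 ia.1 b ia.2

/-- Block diagonal part. -/
def tlD (A22 : Fin m → Matrix (Fin q) (Fin q) ℝ) :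
    Matrix (Fin m × Fin q) (Fin m × Fin q) ℝ :=
  Matrix.of fun ia jb => if ia.1 = jb.1 then A22 ia.1 ia.2 jb.2 else 0

/-- Block diagonal of inverses. -/
noncomputable def tlE (A22 : Fin m → Matrix (Fin q) (Fin q) ℝ) :
    Matrix (Fin m × Fin q) (Fin m × Fin q) ℝ :=
  Matrix.of fun ia jb => if ia.1 = jb.1 then (A22 ia.1)⁻¹ ia.2 jb.2 else 0

lemma tl_eq (A11 : Matrix (Fin p) (Fin p) ℝ)
    (A12 : Fin m → Matrix (Fin p) (Fin q) ℝ)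
    (A22 : Fin m → Matrix (Fin q) (Fin q) ℝ) :
    twoLevelSparse A11 A12 A22 = fromBlocks A11 (tlC A12) (tlCt A12) (tlD A22) := by
  ext x y
  rcases x with a | ⟨i, a⟩ <;> rcases y with b | ⟨j, b⟩ <;> rfl

lemma tlD_mul_tlE (A22 : Fin m → Matrix (Fin q) (Fin q) ℝ)
    (h : ∀ i, IsUnit (A22 i).det) : tlD A22 * tlE A22 = 1 := by
  ext ⟨i, a⟩ ⟨j, b⟩
  simp only [mul_apply, tlD, tlE, of_apply, Fintype.sum_prod_type, ite_mul, mul_ite,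
    zero_mul, mul_zero]
  rw [Finset.sum_eq_single i]
  · by_cases hij : i = j
    · subst hij
      have := Matrix.mul_nonsing_inv (A22 i) (h i)
      have := congrFun (congrFun this a) b
      simpa [mul_apply, one_apply] using this
    · simp [hij, one_apply]
  · intro k _ hk
    simp [Ne.symm hk]
  · simp

lemma tlC_mul_tlE (A12 : Fin m → Matrix (Fin p) (Fin q) ℝ)
    (A22 : Fin m → Matrix (Fin q) (Fin q) ℝ) :
    tlC A12 * tlE A22 = Matrix.of fun d ie => (A12 ie.1 * (A22 ie.1)⁻¹) d ie.2 := by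
  ext d ⟨j, b⟩
  simp only [mul_apply, tlC, tlE, of_apply, Fintype.sum_prod_type, mul_ite, mul_zero]
  rw [Finset.sum_eq_single j]
  · simp [mul_apply]
  · intro k _ hk; simp [hk]
  · simp

end Aux

theorem twoLevel_linear_system {p q m : ℕ}
    (hp : 0 < p) (hq : 0 < q) (hm : 0 < m)
    (A11 : Matrix (Fin p) (Fin p) ℝ)
    (A12 : Fin m → Matrix (Fin p) (Fin q) ℝ)
    (A22 : Fin m → Matrix (Fin q) (Fin q) ℝ)
    (hA11sym : A11.IsSymm) (hA22sym : ∀ i, (A22 i).IsSymm)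
    (hA : IsUnit (twoLevelSparse A11 A12 A22).det)
    (hA22 : ∀ i, IsUnit (A22 i).det)
    (x a : (Fin p ⊕ Fin m × Fin q) → ℝ)
    (hxa : (twoLevelSparse A11 A12 A22).mulVec x = a) :
    (x ∘ Sum.inl) =
      ((twoLevelSparse A11 A12 A22)⁻¹.submatrix Sum.inl Sum.inl).mulVec
        ((a ∘ Sum.inl) -
          ∑ i, (A12 i * (A22 i)⁻¹).mulVec (fun b => a (Sum.inr (i, b)))) ∧
    ∀ i : Fin m,
      (fun b => x (Sum.inr (i, b))) =
        ((A22 i)⁻¹).mulVec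
          ((fun b => a (Sum.inr (i, b))) - (A12 i)ᵀ.mulVec (x ∘ Sum.inl)) := by
  set T := twoLevelSparse A11 A12 A22 with hTdef
  set B := T⁻¹ with hBdef
  have hBT : B * T = 1 := Matrix.nonsing_inv_mul T hA
  -- second part: block equations
  have eq2 : ∀ i : Fin m, (A12 i)ᵀ.mulVec (x ∘ Sum.inl) +
      (A22 i).mulVec (fun b => x (Sum.inr (i, b))) = fun b => a (Sum.inr (i, b)) := by
    intro i
    funext b
    have h := congrFun hxa (Sum.inr (i, b))
    simp only [mulVec, dotProduct, Fintype.sum_sum_type, Fintype.sum_prod_type,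
      hTdef, twoLevelSparse, of_apply] at h
    simp only [Pi.add_apply, mulVec, dotProduct, transpose_apply, Function.comp]
    rw [← h]
    congr 1
    symm
    rw [Finset.sum_eq_single i]
    · simp
    · intro k _ hk; simp [Ne.symm hk]
    · simp
  have part2 : ∀ i : Fin m,
      (fun b => x (Sum.inr (i, b))) =
        ((A22 i)⁻¹).mulVec
          ((fun b => a (Sum.inr (i, b))) - (A12 i)ᵀ.mulVec (x ∘ Sum.inl)) := by
    intro i
    have h : (A22 i).mulVec (fun b => x (Sum.inr (i, b))) =
        (fun b => a (Sum.inr (i, b))) - (A12 i)ᵀ.mulVec (x ∘ Sum.inl) := by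
      rw [← eq2 i]; abel
    rw [← h, Matrix.mulVec_mulVec, Matrix.nonsing_inv_mul _ (hA22 i), Matrix.one_mulVec]
  refine ⟨?_, part2⟩
  -- part 1
  have hx : x = B.mulVec a := by
    rw [← hxa, Matrix.mulVec_mulVec, hBT, Matrix.one_mulVec]
  -- block (1,2) identity from B * T = 1
  have key : B.toBlocks₁₁ * tlC A12 + B.toBlocks₁₂ * tlD A22 = 0 := by
    have h : (fromBlocks B.toBlocks₁₁ B.toBlocks₁₂ B.toBlocks₂₁ B.toBlocks₂₂) *
        (fromBlocks A11 (tlC A12) (tlCt A12) (tlD A22)) = 1 := by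
      rw [← tl_eq, Matrix.fromBlocks_toBlocks]
      exact hBT
    rw [Matrix.fromBlocks_multiply, ← Matrix.fromBlocks_one] at h
    have := congrArg Matrix.toBlocks₁₂ h
    rw [Matrix.toBlocks_fromBlocks₁₂, Matrix.toBlocks_fromBlocks₁₂] at this; exact this
  have hN : B.toBlocks₁₂ = -(B.toBlocks₁₁ * (tlC A12 * tlE A22)) := by
    have h1 : B.toBlocks₁₂ * tlD A22 = -(B.toBlocks₁₁ * tlC A12) :=
      eq_neg_of_add_eq_zero_left (by rw [add_comm]; exact key)
    calc B.toBlocks₁₂ = B.toBlocks₁₂ * (tlD A22 * tlE A22) := by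
          rw [tlD_mul_tlE _ hA22, Matrix.mul_one]
      _ = (B.toBlocks₁₂ * tlD A22) * tlE A22 := by rw [Matrix.mul_assoc]
      _ = -(B.toBlocks₁₁ * tlC A12) * tlE A22 := by rw [h1]
      _ = -(B.toBlocks₁₁ * (tlC A12 * tlE A22)) := by rw [Matrix.neg_mul, Matrix.mul_assoc]
  have ha : a = Sum.elim (a ∘ Sum.inl) (a ∘ Sum.inr) := (Sum.elim_comp_inl_inr a).symm
  have hxinl : x ∘ Sum.inl =
      B.toBlocks₁₁.mulVec (a ∘ Sum.inl) + B.toBlocks₁₂.mulVec (a ∘ Sum.inr) := by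
    have : x = (fromBlocks B.toBlocks₁₁ B.toBlocks₁₂ B.toBlocks₂₁ B.toBlocks₂₂).mulVec
        (Sum.elim (a ∘ Sum.inl) (a ∘ Sum.inr)) := by
      rw [Matrix.fromBlocks_toBlocks, ← ha]; exact hx
    rw [Matrix.fromBlocks_mulVec] at this
    funext c
    exact congrFun this (Sum.inl c)
  have hCE : (tlC A12 * tlE A22).mulVec (a ∘ Sum.inr) =
      ∑ i, (A12 i * (A22 i)⁻¹).mulVec (fun b => a (Sum.inr (i, b))) := by
    funext d
    rw [tlC_mul_tlE]
    simp only [mulVec, dotProduct, of_apply, Fintype.sum_prod_type, Finset.sum_apply,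
      Function.comp]
  have hM : B.toBlocks₁₁ = B.submatrix Sum.inl Sum.inl := rfl
  rw [hxinl, hN, ← hM, Matrix.mulVec_sub, ← hCE, Matrix.neg_mulVec,
    ← Matrix.mulVec_mulVec, sub_eq_add_neg]
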